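/- There exists a non-constant entire function f and a linear differential polynomial F = f'' + a₁ f' + a₀ f with polynomial coefficients such that f omits the value 1 and F omits the value 3; concretely, f(z) = 1 + e^{−z²} with F = f'' + 2z f' + 3f = 3 + e^{−z²} satisfies f(z) ≠ 1 and F(z) ≠ 3 for all z ∈ ℂ. -/

import Mathlib

lemma hasDerivAt_f (z : ℂ) :
    HasDerivAt (fun z : ℂ => 1 + Complex.exp (-z ^ 2)) (-2 * z * Complex.exp (-z ^ 2)) z := by
  have h1 : HasDerivAt (fun z : ℂ => -z ^ 2) (-(2 * z)) z := by
    simpa using ((hasDerivAt_pow 2 z).fun_neg)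
  have : HasDerivAt (fun z : ℂ => 1 + Complex.exp (-z ^ 2)) _ z := (h1.cexp).const_add 1
  convert this using 1
  ring

lemma deriv_f :
    deriv (fun z : ℂ => 1 + Complex.exp (-z ^ 2))
      = fun z => -2 * z * Complex.exp (-z ^ 2) := by
  funext z; exact (hasDerivAt_f z).deriv

lemma hasDerivAt_f' (z : ℂ) :
    HasDerivAt (fun z : ℂ => -2 * z * Complex.exp (-z ^ 2))
      ((-2 + 4 * z ^ 2) * Complex.exp (-z ^ 2)) z := by
  have h1 : HasDerivAt (fun z : ℂ => -z ^ 2) (-(2 * z)) z := by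
    simpa using ((hasDerivAt_pow 2 z).fun_neg)
  have h2 : HasDerivAt (fun z : ℂ => Complex.exp (-z ^ 2))
      (Complex.exp (-z ^ 2) * -(2 * z)) z := h1.cexp
  have h3 : HasDerivAt (fun z : ℂ => (-2 : ℂ) * z) (-2) z := by
    simpa using (hasDerivAt_id z).const_mul (-2 : ℂ)
  have : HasDerivAt (fun z : ℂ => -2 * z * Complex.exp (-z ^ 2)) _ z := h3.mul h2
  convert this using 1
  ring

/-- Counterexample to extending Hayman's alternative to linear differential polynomials:
`f(z) = 1 + e^{−z²}` omits `1`, `F = f'' + 2z·f' + 3f = 3 + e^{−z²}` omits `3`,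
yet `f` is non-constant. -/
theorem hayman_alternative_counterexample
    (f F : ℂ → ℂ) (hf : f = fun z => 1 + Complex.exp (-z ^ 2))
    (hF : F = fun z => deriv (deriv f) z + 2 * z * deriv f z + 3 * f z) :
    (∀ z : ℂ, F z = 3 + Complex.exp (-z ^ 2)) ∧
    (∀ z : ℂ, f z ≠ 1) ∧ (∀ z : ℂ, F z ≠ 3) ∧ ¬ ∃ c : ℂ, ∀ z : ℂ, f z = c := by
  have hd1 : deriv f = fun z => -2 * z * Complex.exp (-z ^ 2) := by
    rw [hf]; exact deriv_f
  have hd2 : deriv (deriv f) = fun z => (-2 + 4 * z ^ 2) * Complex.exp (-z ^ 2) := by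
    rw [hd1]; funext z; exact (hasDerivAt_f' z).deriv
  have hFval : ∀ z : ℂ, F z = 3 + Complex.exp (-z ^ 2) := by
    intro z
    rw [hF, hd2, hd1, hf]; ring
  refine ⟨hFval, ?_, ?_, ?_⟩
  · intro z
    rw [hf]
    simp only
    intro h
    have : Complex.exp (-z ^ 2) = 0 := by linear_combination h
    exact Complex.exp_ne_zero _ this
  · intro z h
    rw [hFval z] at h
    have : Complex.exp (-z ^ 2) = 0 := by linear_combination h
    exact Complex.exp_ne_zero _ this
  · rintro ⟨c, hc⟩
    have h0 := hc 0
    have h1 := hc 1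
    rw [hf] at h0 h1
    simp at h0 h1
    have : Complex.exp (-1) = 1 := by linear_combination h1 - h0
    have hr : Complex.exp (-1 : ℂ) = (Real.exp (-1) : ℂ) := by
      push_cast [Complex.ofReal_exp]; norm_num
    rw [hr] at this
    have : Real.exp (-1) = 1 := by exact_mod_cast this
    have hlt : Real.exp (-1) < 1 := Real.exp_lt_one_iff.mpr (by norm_num)
    linarith
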